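/- Let 0 ≤ q ≤ p ≤ 1 and c ≥ 0. If kl(q,p) ≤ c, then p ≤ ( √(q + c/2) + √(c/2) )². -/

import Mathlib

open MeasureTheory ENNReal

/-- Binary Kullback–Leibler divergence `kl(q,p)` for `q, p ∈ [0,1]`, with the conventions
`0 · ln 0 = 0` and `kl(q,p) = ∞` when `p ∈ {0,1}` and `q ≠ p`. -/
noncomputable def klBin (q p : ℝ) : ℝ≥0∞ :=
  if (p = 0 ∨ p = 1) ∧ q ≠ p then ∞
  else ENNReal.ofReal (q * Real.log (q / p) + (1 - q) * Real.log ((1 - q) / (1 - p)))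

/-- Refined Pinsker, positive case. -/
lemma pinsker_refined_pos (q p : ℝ) (hq : 0 < q) (hqp : q < p) (hp : p < 1) :
    (p - q) ^ 2 / (2 * p) ≤ q * Real.log (q / p) + (1 - q) * Real.log ((1 - q) / (1 - p)) := by
  set g : ℝ → ℝ := fun t =>
    q * Real.log q - q * Real.log t + (1 - q) * Real.log (1 - q)
      - (1 - q) * Real.log (1 - t) - (t - q) ^ 2 / (2 * t) with hg
  have hderiv : ∀ t ∈ Set.Ioo q p, HasDerivAt g
      (-(q / t) + (1 - q) / (1 - t) - ((2 * (t - q) * (2 * t) - (t - q) ^ 2 * 2) / (2 * t) ^ 2)) t := by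
    intro t ht
    have ht0 : 0 < t := hq.trans ht.1
    have ht1 : t < 1 := ht.2.trans hp
    have h1 : HasDerivAt (fun t : ℝ => q * Real.log t) (q * t⁻¹) t :=
      (Real.hasDerivAt_log ht0.ne').const_mul q
    have h2 : HasDerivAt (fun t : ℝ => Real.log (1 - t)) (-(1 / (1 - t))) t := by
      have := (Real.hasDerivAt_log (by linarith : (1:ℝ) - t ≠ 0)).comp t
        ((hasDerivAt_const t (1:ℝ)).sub (hasDerivAt_id t))
      simpa [Function.comp_def] using this
    have h2' : HasDerivAt (fun t : ℝ => (1 - q) * Real.log (1 - t))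
        ((1 - q) * -(1 / (1 - t))) t := h2.const_mul _
    have h3 : HasDerivAt (fun t : ℝ => (t - q) ^ 2 / (2 * t))
        ((2 * (t - q) * (2 * t) - (t - q) ^ 2 * 2) / (2 * t) ^ 2) t := by
      have hn : HasDerivAt (fun t : ℝ => (t - q) ^ 2) (2 * (t - q)) t := by
        have := ((hasDerivAt_id t).sub (hasDerivAt_const t q)).pow 2
        simpa [mul_comm, Pi.pow_def, Pi.sub_def] using this
      have hd : HasDerivAt (fun t : ℝ => 2 * t) 2 t := by
        simpa using (hasDerivAt_id t).const_mul (2:ℝ)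
      exact hn.div hd (by positivity)
    have := (((hasDerivAt_const t (q * Real.log q)).sub h1).add
        (hasDerivAt_const t ((1 - q) * Real.log (1 - q)))).sub h2'
    have := this.sub h3
    exact this.congr_deriv (by ring)
  have hD : ∀ t ∈ Set.Ioo q p,
      0 ≤ -(q / t) + (1 - q) / (1 - t) - ((2 * (t - q) * (2 * t) - (t - q) ^ 2 * 2) / (2 * t) ^ 2) := by
    intro t ht
    have ht0 : 0 < t := hq.trans ht.1
    have ht1 : t < 1 := ht.2.trans hp
    have htq : q ≤ t := le_of_lt ht.1
    have key : -(q / t) + (1 - q) / (1 - t) - ((2 * (t - q) * (2 * t) - (t - q) ^ 2 * 2) / (2 * t) ^ 2)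
        = (t - q) * (2 * t - (1 - t) * (t + q)) / (2 * t ^ 2 * (1 - t)) := by
      have h1t : (1:ℝ) - t ≠ 0 := by linarith
      have ht' : t ≠ 0 := ht0.ne'
      field_simp
      ring
    rw [key]
    apply div_nonneg
    · apply mul_nonneg (by linarith)
      nlinarith
    · have h1t : (0:ℝ) < 1 - t := by linarith
      exact le_of_lt (mul_pos (by positivity) h1t)
  have hmono : MonotoneOn g (Set.Icc q p) := by
    apply monotoneOn_of_deriv_nonneg (convex_Icc q p)
    · have c1 : ContinuousOn (fun t : ℝ => Real.log t) (Set.Icc q p) :=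
        ContinuousOn.log continuousOn_id (fun x hx => (lt_of_lt_of_le hq hx.1).ne')
      have c2 : ContinuousOn (fun t : ℝ => Real.log (1 - t)) (Set.Icc q p) :=
        ContinuousOn.log (continuousOn_const.sub continuousOn_id)
          (fun x hx => by have : x < 1 := lt_of_le_of_lt hx.2 hp; intro h; linarith [sub_eq_zero.mp h])
      have c3 : ContinuousOn (fun t : ℝ => (t - q) ^ 2 / (2 * t)) (Set.Icc q p) :=
        ContinuousOn.div (by fun_prop) (by fun_prop)
          (fun x hx => by have : 0 < x := lt_of_lt_of_le hq hx.1; positivity)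
      exact ((((continuousOn_const.sub (continuousOn_const.mul c1)).add
        continuousOn_const).sub (continuousOn_const.mul c2)).sub c3)
    · rw [interior_Icc]
      intro t ht
      exact (hderiv t ht).differentiableAt.differentiableWithinAt
    · rw [interior_Icc]
      intro t ht
      rw [(hderiv t ht).deriv]
      exact hD t ht
  have hgq : g q = 0 := by
    simp [hg]
  have hgp : g q ≤ g p := hmono (Set.left_mem_Icc.mpr hqp.le) (Set.right_mem_Icc.mpr hqp.le) hqp.le
  rw [hgq] at hgp
  have hlq : Real.log (q / p) = Real.log q - Real.log p := Real.log_div hq.ne' (by linarith)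
  have hlq2 : Real.log ((1 - q) / (1 - p)) = Real.log (1 - q) - Real.log (1 - p) :=
    Real.log_div (by linarith) (by linarith)
  rw [hlq, hlq2]
  simp only [hg] at hgp
  nlinarith [hgp]

/-- **Inversion of the refined Pinsker inequality** (quadratic bound step):
if `0 ≤ q ≤ p ≤ 1`, `c ≥ 0` and `kl(q,p) ≤ c`, then `p ≤ (√(q + c/2) + √(c/2))²`. -/
theorem kl_inversion_quadratic (q p c : ℝ) (hq : 0 ≤ q) (hqp : q ≤ p) (hp : p ≤ 1)
    (hc : 0 ≤ c) (hkl : klBin q p ≤ ENNReal.ofReal c) :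
    p ≤ (Real.sqrt (q + c / 2) + Real.sqrt (c / 2)) ^ 2 := by
  set A := Real.sqrt (q + c / 2) with hA
  set B := Real.sqrt (c / 2) with hB
  have hA0 : 0 ≤ A := Real.sqrt_nonneg _
  have hB0 : 0 ≤ B := Real.sqrt_nonneg _
  have hA2 : A ^ 2 = q + c / 2 := Real.sq_sqrt (by linarith)
  have hB2 : B ^ 2 = c / 2 := Real.sq_sqrt (by linarith)
  rcases eq_or_lt_of_le hqp with heq | hlt
  · -- q = p
    subst heq
    nlinarith [mul_nonneg hA0 hB0]
  · -- q < p, so p > 0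
    have hp0 : 0 < p := lt_of_le_of_lt hq hlt
    rcases eq_or_lt_of_le hp with hp1 | hp1
    · -- p = 1, q ≠ p : klBin = ∞, contradiction
      exfalso
      rw [klBin, if_pos ⟨Or.inr hp1, by intro h; rw [h] at hlt; exact lt_irrefl _ hlt⟩] at hkl
      exact (ENNReal.ofReal_ne_top) (top_le_iff.mp hkl)
    · -- 0 ≤ q < p < 1
      have hK : q * Real.log (q / p) + (1 - q) * Real.log ((1 - q) / (1 - p)) ≤ c := by
        rw [klBin] at hkl
        rw [if_neg] at hkl
        · exact (ENNReal.ofReal_le_ofReal_iff hc).mp hkl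
        · rintro ⟨h1 | h1, h2⟩
          · exact hp0.ne' h1
          · exact hp1.ne h1
      have hpinsker : (p - q) ^ 2 / (2 * p) ≤
          q * Real.log (q / p) + (1 - q) * Real.log ((1 - q) / (1 - p)) := by
        rcases eq_or_lt_of_le hq with hq0 | hq0
        · -- q = 0
          subst hq0
          simp only [zero_mul, zero_div, sub_zero, one_mul, zero_add]
          rw [Real.log_div one_ne_zero (by linarith), Real.log_one]
          have := Real.log_le_sub_one_of_pos (by linarith : (0:ℝ) < 1 - p)
          rw [div_le_iff₀ (by linarith)]
          nlinarith
        · exact pinsker_refined_pos q p hq0 hlt hp1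
      have h2 : (p - q) ^ 2 ≤ 2 * p * c := by
        have := hpinsker.trans hK
        rw [div_le_iff₀ (by linarith)] at this
        linarith
      rcases le_or_gt p (q + c) with hcase | hcase
      · nlinarith [mul_nonneg hA0 hB0]
      · have hsq : (p - q - c) ^ 2 ≤ (2 * (A * B)) ^ 2 := by -- sq
          have hAB2 : (2 * (A * B)) ^ 2 = 4 * (q + c / 2) * (c / 2) := by
            have : (2 * (A * B)) ^ 2 = 4 * A ^ 2 * B ^ 2 := by ring
            rw [this, hA2, hB2]
          nlinarith
        have hle : p - q - c ≤ 2 * (A * B) := by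
          have h := Real.sqrt_le_sqrt hsq
          rwa [Real.sqrt_sq (by linarith), Real.sqrt_sq (by positivity)] at h
        nlinarith
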